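/- With J-cal(x) = Σ_{n≥0} (-1)^{⌈n/2⌉} x^n q^{n(n-1)/2} / (q²;q²)_{⌊n/2⌋} and K-cal(x) = Σ_{n≥0} x^n q^{n(n+1)/2} Σ_{k=0}^{⌊n/2⌋} (-1)^k/(q²;q²)_k, one has K-cal(x) - xq·K-cal(xq) = (J-cal(x) - x·J-cal(xq))/(1-2x) = J-cal(x) + x·J-cal(-xq). -/

import Mathlib

open PowerSeries

noncomputable section
namespace FC

/-- The field `ℚ(q)` of rational functions in `q`. -/
abbrev K : Type := RatFunc ℚ

/-- The variable `q`. -/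
def q : K := RatFunc.X

/-- `(q²;q²)_m = ∏_{i=1}^{m} (1 - q^{2i})`. -/
def poch2 (m : ℕ) : K := ∏ i ∈ Finset.range m, (1 - q ^ (2 * (i + 1)))

/-- `𝒥(x) = Σ_{n≥0} (-1)^{⌈n/2⌉} x^n q^{C(n,2)} / (q²;q²)_{⌊n/2⌋}`. -/
def Jcal : PowerSeries K :=
  PowerSeries.mk fun n => (-1 : K) ^ ((n + 1) / 2) * q ^ n.choose 2 / poch2 (n / 2)

/-- `𝒦(x) = Σ_{n≥0} x^n q^{n(n+1)/2} Σ_{k=0}^{⌊n/2⌋} (-1)^k/(q²;q²)_k`. -/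
def Kcal : PowerSeries K :=
  PowerSeries.mk fun n =>
    q ^ (n * (n + 1) / 2) * ∑ k ∈ Finset.range (n / 2 + 1), (-1 : K) ^ k / poch2 k

lemma one_sub_q_pow_ne_zero {i : ℕ} (hi : i ≠ 0) : (1 : K) - q ^ i ≠ 0 := by
  intro h
  have h1 : q ^ i = 1 := by linear_combination -h
  have h2 : (algebraMap (Polynomial ℚ) K) (Polynomial.X ^ i) =
      (algebraMap (Polynomial ℚ) K) 1 := by
    simpa [map_pow, RatFunc.algebraMap_X, q] using h1
  have h3 := RatFunc.algebraMap_injective ℚ h2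
  have h4 := congrArg Polynomial.natDegree h3
  simp [Polynomial.natDegree_X_pow] at h4
  exact hi h4

lemma poch2_ne_zero (m : ℕ) : poch2 m ≠ 0 := by
  unfold poch2
  exact Finset.prod_ne_zero_iff.2 fun i _ => one_sub_q_pow_ne_zero (by positivity)

lemma poch2_succ (m : ℕ) : poch2 (m + 1) = poch2 m * (1 - q ^ (2 * (m + 1))) :=
  Finset.prod_range_succ _ _

lemma half_eq {a b : ℕ} (h : a = b * 2) : a / 2 = b := by omega

lemma ch1 (m : ℕ) : (2 * m + 1).choose 2 = 2 * m * m + m := by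
  rw [Nat.choose_two_right, Nat.add_sub_cancel]; exact half_eq (by ring)

lemma ch2 (m : ℕ) : (2 * m + 2).choose 2 = 2 * m * m + 3 * m + 1 := by
  rw [Nat.choose_two_right, show 2 * m + 2 - 1 = 2 * m + 1 from by omega]
  exact half_eq (by ring)

lemma ch3 (m : ℕ) : (2 * m + 3).choose 2 = 2 * m * m + 5 * m + 3 := by
  rw [Nat.choose_two_right, show 2 * m + 3 - 1 = 2 * m + 2 from by omega]
  exact half_eq (by ring)

lemma coeff_J (n : ℕ) :
    coeff n Jcal = (-1 : K) ^ ((n + 1) / 2) * q ^ n.choose 2 / poch2 (n / 2) :=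
  coeff_mk _ _

lemma coeff_Kc (n : ℕ) :
    coeff n Kcal =
      q ^ (n * (n + 1) / 2) * ∑ k ∈ Finset.range (n / 2 + 1), (-1 : K) ^ k / poch2 k :=
  coeff_mk _ _

lemma E2 : Kcal - PowerSeries.X * PowerSeries.C q * rescale q Kcal
    = Jcal + PowerSeries.X * rescale (-q) Jcal := by
  ext n
  rw [map_sub, map_add]
  rcases n with _ | k
  · simp [Jcal, Kcal, poch2]
  · have hs1 : coeff (k + 1) (PowerSeries.X * PowerSeries.C q * rescale q Kcal)
        = q ^ (k + 1) * coeff k Kcal := by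
      have h : PowerSeries.X * PowerSeries.C q * rescale q Kcal
          = PowerSeries.C q * (PowerSeries.X * rescale q Kcal) := by ring
      rw [h, coeff_C_mul, coeff_succ_X_mul, coeff_rescale]; ring
    have hs2 : coeff (k + 1) (PowerSeries.X * rescale (-q) Jcal)
        = (-q) ^ k * coeff k Jcal := by
      rw [coeff_succ_X_mul, coeff_rescale]
    rw [hs1, hs2]
    rcases Nat.even_or_odd k with ⟨m, hm⟩ | ⟨m, hm⟩
    · -- k = 2m, n = 2m+1
      have hk : k = 2 * m := by omega
      subst hk
      rcases m with _ | j
      · -- n = 1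
        norm_num [coeff_J, coeff_Kc, poch2]
      · -- n = 2j+3
        have e1 : 2 * (j + 1) + 1 = 2 * j + 3 := by ring
        have e2 : 2 * (j + 1) = 2 * j + 2 := by ring
        rw [e1, e2, coeff_J, coeff_J, coeff_Kc, coeff_Kc]
        have d1 : (2 * j + 3) / 2 = j + 1 := by omega
        have d2 : (2 * j + 2) / 2 = j + 1 := by omega
        have d3 : (2 * j + 3 + 1) / 2 = j + 2 := by omega
        have d4 : (2 * j + 2 + 1) / 2 = j + 1 := by omega
        have d5 : (2 * j + 3) * (2 * j + 3 + 1) / 2 = 2 * j * j + 7 * j + 6 :=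
          half_eq (by ring)
        have d6 : (2 * j + 2) * (2 * j + 2 + 1) / 2 = 2 * j * j + 5 * j + 3 :=
          half_eq (by ring)
        have hneg : (-q) ^ (2 * j + 2) = q ^ (2 * j + 2) :=
          Even.neg_pow ⟨j + 1, by ring⟩ q
        simp only [d1, d2, d3, d4, d5, d6, ch2, ch3, hneg]
        field_simp
        ring
    · -- k = 2m+1, n = 2m+2
      subst hm
      rw [coeff_J, coeff_J, coeff_Kc, coeff_Kc]
      have d1 : (2 * m + 1 + 1) / 2 = m + 1 := by omega
      have d2 : (2 * m + 1) / 2 = m := by omega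
      have d3 : (2 * m + 1 + 1 + 1) / 2 = m + 1 := by omega
      have d5 : (2 * m + 1 + 1) * (2 * m + 1 + 1 + 1) / 2 = 2 * m * m + 5 * m + 3 :=
        half_eq (by ring)
      have d6 : (2 * m + 1) * (2 * m + 1 + 1) / 2 = 2 * m * m + 3 * m + 1 :=
        half_eq (by ring)
      have c1 : (2 * m + 1 + 1).choose 2 = 2 * m * m + 3 * m + 1 := ch2 m
      have c2 : (2 * m + 1).choose 2 = 2 * m * m + m := ch1 m
      have hneg : (-q) ^ (2 * m + 1) = -q ^ (2 * m + 1) :=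
        Odd.neg_pow ⟨m, by ring⟩ q
      simp only [d1, d2, d3, d5, d6, c1, c2, Finset.sum_range_succ, hneg, poch2_succ]
      have hP := poch2_ne_zero m
      have hQ : (1 : K) - q ^ (2 * (m + 1)) ≠ 0 :=
        one_sub_q_pow_ne_zero (by positivity)
      field_simp
      ring

lemma coeff_succ_shiftJ (a : K) (k : ℕ) :
    coeff (k + 1) (PowerSeries.X * rescale a Jcal) = a ^ k * coeff k Jcal := by
  rw [coeff_succ_X_mul, coeff_rescale]

lemma keyE (j : ℕ) :
    coeff (2 * j + 3) Jcal + q ^ (2 * j + 2) * coeff (2 * j + 2) Jcal = 0 := by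
  rw [coeff_J, coeff_J]
  have d1 : (2 * j + 3 + 1) / 2 = j + 2 := by omega
  have d2 : (2 * j + 2 + 1) / 2 = j + 1 := by omega
  have d3 : (2 * j + 3) / 2 = j + 1 := by omega
  have d4 : (2 * j + 2) / 2 = j + 1 := by omega
  simp only [d1, d2, d3, d4, ch2, ch3]
  have hP := poch2_ne_zero (j + 1)
  field_simp
  ring

lemma keyO (m : ℕ) :
    q ^ (2 * m + 2) * coeff (2 * m + 2) Jcal - coeff (2 * m + 2) Jcal
      + q ^ (2 * m + 1) * coeff (2 * m + 1) Jcal = 0 := by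
  rw [coeff_J, coeff_J]
  have d1 : (2 * m + 2 + 1) / 2 = m + 1 := by omega
  have d2 : (2 * m + 1 + 1) / 2 = m + 1 := by omega
  have d3 : (2 * m + 2) / 2 = m + 1 := by omega
  have d4 : (2 * m + 1) / 2 = m := by omega
  simp only [d1, d2, d3, d4, ch1, ch2, poch2_succ]
  have hP := poch2_ne_zero m
  have hQ : (1 : K) - q ^ (2 * (m + 1)) ≠ 0 := one_sub_q_pow_ne_zero (by positivity)
  field_simp
  ring

lemma E1aux : (Jcal + PowerSeries.X * rescale (-q) Jcal) * (1 - 2 * PowerSeries.X)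
    = Jcal - PowerSeries.X * rescale q Jcal := by
  set F := Jcal + PowerSeries.X * rescale (-q) Jcal with hFdef
  have hF : F * (1 - 2 * PowerSeries.X) = F - F * PowerSeries.X - F * PowerSeries.X := by
    ring
  rw [hF]
  ext n
  rw [map_sub, map_sub, map_sub]
  have hcF : ∀ k, coeff (k + 1) F = coeff (k + 1) Jcal + (-q) ^ k * coeff k Jcal := by
    intro k
    rw [hFdef, map_add, coeff_succ_shiftJ]
  rcases n with _ | n
  · simp [hFdef]
  rcases n with _ | k
  · rw [coeff_succ_mul_X, coeff_succ_shiftJ, hcF 0]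
    have h0 : coeff 0 F = coeff 0 Jcal := by simp [hFdef]
    rw [h0]
    ring
  · rw [coeff_succ_mul_X, coeff_succ_shiftJ, hcF (k + 1), hcF k]
    rcases Nat.even_or_odd k with ⟨m, hm⟩ | ⟨m, hm⟩
    · -- k = 2m : need J_{2m+1} + q^{2m} J_{2m} = 0
      have hk : k = 2 * m := by omega
      subst hk
      rcases m with _ | j
      · -- k = 0, n = 2
        norm_num [coeff_J, poch2]
      · have e : 2 * (j + 1) = 2 * j + 2 := by ring
        rw [e]
        have hn1 : (-q) ^ (2 * j + 2 + 1) = -q ^ (2 * j + 2 + 1) :=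
          Odd.neg_pow ⟨j + 1, by ring⟩ q
        have hn2 : (-q) ^ (2 * j + 2) = q ^ (2 * j + 2) :=
          Even.neg_pow ⟨j + 1, by ring⟩ q
        rw [hn1, hn2]
        have key := keyE j
        have e2 : 2 * j + 2 + 1 = 2 * j + 3 := by ring
        rw [e2]
        linear_combination (-2 : K) * key
    · -- k = 2m+1
      subst hm
      have hn1 : (-q) ^ (2 * m + 1 + 1) = q ^ (2 * m + 1 + 1) :=
        Even.neg_pow ⟨m + 1, by ring⟩ q
      have hn2 : (-q) ^ (2 * m + 1) = -q ^ (2 * m + 1) :=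
        Odd.neg_pow ⟨m, by ring⟩ q
      rw [hn1, hn2]
      have key := keyO m
      have e2 : 2 * m + 1 + 1 = 2 * m + 2 := by ring
      rw [e2] at *
      linear_combination (2 : K) * key

lemma E1 : Kcal - PowerSeries.X * PowerSeries.C q * rescale q Kcal
    = (Jcal - PowerSeries.X * rescale q Jcal) * (1 - 2 * PowerSeries.X)⁻¹ := by
  rw [PowerSeries.eq_mul_inv_iff_mul_eq (by simp), E2, E1aux]


/-- `𝒦(x) - xq·𝒦(xq) = (𝒥(x) - x·𝒥(xq))/(1-2x) = 𝒥(x) + x·𝒥(-xq)`. -/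
theorem stmt10 :
    Kcal - PowerSeries.X * PowerSeries.C q * rescale q Kcal
        = (Jcal - PowerSeries.X * rescale q Jcal) * (1 - 2 * PowerSeries.X)⁻¹ ∧
    Kcal - PowerSeries.X * PowerSeries.C q * rescale q Kcal
        = Jcal + PowerSeries.X * rescale (-q) Jcal :=
  ⟨E1, E2⟩

end FC
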